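/- Fix m ≥ 4 and set d = q^{2(m−2)} and N = (q^m − 1)/(q − 1). Then ⌊(d−1)/2⌋ divided by (N − (q^{m−1} + q^{m−3} − q − 1))/2 is strictly less than q^{m−2} + q^{m−3}. Consequently, for any set E with |E| ≤ ⌊(d−1)/2⌋ distributed among at least q^{m−2} + q^{m−3} disjoint sets of size N, some set contains fewer than (N − (q^{m−1} + q^{m−3} − q − 1))/2 elements of E. -/
import Mathlib


set_option maxHeartbeats 1000000 in
/-- For m ≥ 4, with d = q^{2(m−2)} and N = (q^m − 1)/(q − 1),
⌊(d−1)/2⌋ / ((N − (q^{m−1} + q^{m−3} − q − 1))/2) < q^{m−2} + q^{m−3}; consequently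
any set E with |E| ≤ ⌊(d−1)/2⌋ distributed among at least q^{m−2} + q^{m−3}
pairwise disjoint sets of size N has some set containing fewer than
(N − (q^{m−1} + q^{m−3} − q − 1))/2 of its elements. -/
theorem stmt16 (q m : ℕ) (hq : IsPrimePow q) (hm : 4 ≤ m) :
    ((((q ^ (2 * (m - 2)) - 1) / 2 : ℕ) : ℝ) /
        (((((q ^ m - 1) / (q - 1) : ℕ) : ℝ) -
          ((q : ℝ) ^ (m - 1) + (q : ℝ) ^ (m - 3) - q - 1)) / 2) <
      (q : ℝ) ^ (m - 2) + (q : ℝ) ^ (m - 3)) ∧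
    (∀ (α : Type) [DecidableEq α] (ι : Type) [Fintype ι] (A : ι → Finset α) (E : Finset α),
      q ^ (m - 2) + q ^ (m - 3) ≤ Fintype.card ι →
      (∀ i j : ι, i ≠ j → Disjoint (A i) (A j)) →
      (∀ i : ι, (A i).card = (q ^ m - 1) / (q - 1)) →
      E.card ≤ (q ^ (2 * (m - 2)) - 1) / 2 →
      ∃ i : ι, ((E ∩ A i).card : ℝ) <
        (((((q ^ m - 1) / (q - 1) : ℕ) : ℝ) -
          ((q : ℝ) ^ (m - 1) + (q : ℝ) ^ (m - 3) - q - 1)) / 2)) := by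
  obtain ⟨a, rfl⟩ : ∃ a, m = a + 4 := ⟨m - 4, by omega⟩
  have hq2 : 2 ≤ q := hq.two_le
  simp only [show a + 4 - 1 = a + 3 from rfl, show a + 4 - 2 = a + 2 from rfl,
    show a + 4 - 3 = a + 1 from rfl]
  have hx : (2:ℝ) ≤ (q:ℝ) := by exact_mod_cast hq2
  set x : ℝ := (q:ℝ) with hxdef
  set t : ℝ := x ^ a with htdef
  have ht : (1:ℝ) ≤ t := one_le_pow₀ (by linarith)
  have hp1 : x ^ (a+1) = x * t := by rw [htdef]; ring
  have hp2 : x ^ (a+2) = x^2 * t := by rw [htdef]; ring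
  have hp3 : x ^ (a+3) = x^3 * t := by rw [htdef]; ring
  have hp4 : x ^ (a+4) = x^4 * t := by rw [htdef]; ring
  have hp24 : x ^ (2*(a+2)) = t^2 * x^4 := by
    rw [htdef, ← pow_mul, ← pow_add]; congr 1; omega
  -- N
  set Nn : ℕ := (q ^ (a+4) - 1) / (q - 1) with hNndef
  have hdvd : (q - 1) ∣ q ^ (a+4) - 1 := by
    simpa using Nat.sub_dvd_pow_sub_pow q 1 (a+4)
  have hNnat : (q - 1) * Nn = q ^ (a+4) - 1 := Nat.mul_div_cancel' hdvd
  have hq1 : (1:ℕ) ≤ q := by omega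
  have hqp : (1:ℕ) ≤ q ^ (a+4) := Nat.one_le_pow _ _ (by omega)
  have hNr : (x - 1) * (Nn : ℝ) = x^4 * t - 1 := by
    have := congrArg (Nat.cast : ℕ → ℝ) hNnat
    push_cast [Nat.cast_sub hq1, Nat.cast_sub hqp] at this
    rw [hp4] at this
    linarith
  set S : ℝ := (Nn : ℝ) - (x ^ (a+3) + x ^ (a+1) - x - 1) with hSdef
  clear_value S
  have hS : (x - 1) * S = x^3*t - x^2*t + x*t + x^2 - 2 := by
    rw [hSdef, hp3, hp1]; linear_combination hNr
  have hx1 : (0:ℝ) < x - 1 := by linarith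
  have hpolypos : (0:ℝ) < x^3*t - x^2*t + x*t + x^2 - 2 := by
    nlinarith [mul_nonneg (sub_nonneg.mpr hx) (sub_nonneg.mpr ht), sq_nonneg x,
      mul_nonneg (mul_nonneg (sub_nonneg.mpr hx) (sub_nonneg.mpr ht)) (sq_nonneg x)]
  have hSpos : (0:ℝ) < S := by nlinarith [hS, hpolypos]
  -- floor bound
  have hflc : (((q ^ (2*(a+2)) - 1 : ℕ) : ℝ)) = t^2 * x^4 - 1 := by
    have h1 : (1:ℕ) ≤ q ^ (2*(a+2)) := Nat.one_le_pow _ _ (by omega)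
    push_cast [Nat.cast_sub h1]
    rw [hp24]
  have hfl : ((((q ^ (2*(a+2)) - 1) / 2 : ℕ)) : ℝ) ≤ (t^2 * x^4 - 1) / 2 := by
    calc ((((q ^ (2*(a+2)) - 1) / 2 : ℕ)) : ℝ) ≤ ((q ^ (2*(a+2)) - 1 : ℕ) : ℝ) / 2 := by
          exact_mod_cast Nat.cast_div_le
      _ = (t^2 * x^4 - 1) / 2 := by rw [hflc]
  -- key polynomial inequality
  have hx2 : (4:ℝ) ≤ x^2 := by nlinarith
  have e1 : (0:ℝ) ≤ t*x^2*(t*x^2 - 2) := mul_nonneg (by positivity) (by nlinarith)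
  have e2 : (0:ℝ) ≤ t*x*(x^2 - 2) := mul_nonneg (by positivity) (by nlinarith)
  have hQ : (x-1) * (t^2*x^4 - 1) < (x^2*t + x*t) * (x^3*t - x^2*t + x*t + x^2 - 2) := by
    nlinarith [e1, e2, mul_pos (mul_pos (by positivity : (0:ℝ) < t) (by positivity : (0:ℝ) < t))
      (by positivity : (0:ℝ) < x^2), mul_pos (by positivity : (0:ℝ) < t) (by positivity : (0:ℝ) < x^4)]
  have hkey : t^2 * x^4 - 1 < (x^2*t + x*t) * S := by
    have h2 : (x-1) * ((x^2*t + x*t) * S) = (x^2*t + x*t) * (x^3*t - x^2*t + x*t + x^2 - 2) := by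
      linear_combination (x^2*t + x*t) * hS
    have h3 := hQ
    rw [← h2] at h3
    exact lt_of_mul_lt_mul_left h3 (le_of_lt hx1)
  have hmain : ((((q ^ (2*(a+2)) - 1) / 2 : ℕ)) : ℝ) < (x ^ (a+2) + x ^ (a+1)) * (S / 2) := by
    rw [hp2, hp1]
    calc ((((q ^ (2*(a+2)) - 1) / 2 : ℕ)) : ℝ) ≤ (t^2 * x^4 - 1) / 2 := hfl
      _ < ((x^2*t + x*t) * S) / 2 := by linarith [hkey]
      _ = (x^2*t + x*t) * (S/2) := by ring
  constructor
  · rw [div_lt_iff₀ (by linarith : (0:ℝ) < S / 2)]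
    exact hmain
  · intro α _ ι _ A E hcard hdisj hA hE
    by_contra hcon
    push_neg at hcon
    classical
    have hsum : ∑ i, (E ∩ A i).card ≤ E.card := by
      rw [← Finset.card_biUnion (by
        intro i _ j _ hij
        exact (hdisj i j hij).mono Finset.inter_subset_right Finset.inter_subset_right)]
      apply Finset.card_le_card
      intro y hy
      simp only [Finset.mem_biUnion, Finset.mem_inter] at hy
      obtain ⟨i, _, hy, _⟩ := hy
      exact hy
    have hcast : ((Fintype.card ι : ℕ) : ℝ) * (S / 2) ≤ (E.card : ℝ) := by
      calc ((Fintype.card ι : ℕ) : ℝ) * (S / 2) = ∑ _i : ι, S / 2 := by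
            rw [Finset.sum_const, Finset.card_univ, nsmul_eq_mul]
        _ ≤ ∑ i : ι, ((E ∩ A i).card : ℝ) := Finset.sum_le_sum fun i _ => hcon i
        _ = ((∑ i, (E ∩ A i).card : ℕ) : ℝ) := by push_cast; ring
        _ ≤ (E.card : ℝ) := by exact_mod_cast hsum
    have hKle : ((q ^ (a+2) + q ^ (a+1) : ℕ) : ℝ) * (S / 2) ≤
        ((Fintype.card ι : ℕ) : ℝ) * (S / 2) := by
      apply mul_le_mul_of_nonneg_right _ (by linarith)
      exact_mod_cast hcard
    have hEfl : (E.card : ℝ) ≤ ((((q ^ (2*(a+2)) - 1) / 2 : ℕ)) : ℝ) := by exact_mod_cast hE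
    have hKcast : ((q ^ (a+2) + q ^ (a+1) : ℕ) : ℝ) = x ^ (a+2) + x ^ (a+1) := by push_cast; rfl
    rw [hKcast] at hKle
    linarith
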